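/- Let Γ be a self-adjoint, positive, unbounded operator with discrete spectrum on a separable Hilbert space H, and let L be a self-adjoint operator with ‖Lψ‖ ≤ C‖ψ‖_1 for all ψ ∈ H^1(Γ). Suppose φ_0 ∈ H^1(Γ) with ‖φ_0‖ = 1 is an eigenvector of L corresponding to an eigenvalue E. Then for τ = (2‖φ_0‖_1²)^{-1}, the solution φ^A of dφ^A/dt = iAL φ^A − Γ φ^A, φ^A(0) = φ_0, satisfies ‖φ^A(τ)‖ ≥ 1/2 for every A ∈ ℝ. -/

import Mathlib

open MeasureTheory Filter Set
open scoped InnerProductSpace ENNReal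

noncomputable section

variable {H : Type*} [NormedAddCommGroup H] [InnerProductSpace ℂ H] [CompleteSpace H]

/-- The spectral data of a self-adjoint, positive, unbounded operator `Γ` with discrete
spectrum on a separable Hilbert space `H`: the eigenvalues `0 < λ 0 ≤ λ 1 ≤ ⋯ → ∞`
together with an orthonormal (Hilbert) basis of corresponding eigenvectors. -/
structure DiscreteSpectralOp (H : Type*) [NormedAddCommGroup H]
    [InnerProductSpace ℂ H] [CompleteSpace H] where
  /-- the orthonormal eigenbasis of `Γ` -/
  e : HilbertBasis ℕ ℂ H
  /-- the eigenvalues of `Γ` -/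
  lam : ℕ → ℝ
  lam_pos : ∀ n, 0 < lam n
  lam_mono : Monotone lam
  lam_top : Tendsto lam atTop atTop

namespace DiscreteSpectralOp

variable (Γ : DiscreteSpectralOp H)

/-- the coefficients of `ψ` in the eigenbasis of `Γ` -/
def coeff (ψ : H) (n : ℕ) : ℂ := Γ.e.repr ψ n

/-- membership in the (homogeneous) Sobolev space `H^m(Γ)`:
`∑ λ_n^m |c_n|² < ∞` -/
def MemHs (m : ℝ) (ψ : H) : Prop :=
  Summable fun n => Γ.lam n ^ m * ‖Γ.coeff ψ n‖ ^ 2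

/-- the Sobolev norm `‖ψ‖_{H^m(Γ)} = (∑ λ_n^m |c_n|²)^{1/2}` -/
def snorm (m : ℝ) (ψ : H) : ℝ :=
  Real.sqrt (∑' n, Γ.lam n ^ m * ‖Γ.coeff ψ n‖ ^ 2)

/-- the operator `Γ` itself, `Γψ = ∑ λ_n c_n e_n` (junk value off its domain `H²(Γ)`) -/
def apply (ψ : H) : H := ∑' n, ((Γ.lam n : ℂ) * Γ.coeff ψ n) • (Γ.e n : H)

/-- the orthogonal projection `P_N` onto the span of the first `N` eigenvectors of `Γ` -/
def projN (N : ℕ) (ψ : H) : H := ∑ n ∈ Finset.range N, Γ.coeff ψ n • (Γ.e n : H)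

end DiscreteSpectralOp

namespace DiscreteSpectralOp

variable (Γ : DiscreteSpectralOp H)

lemma coeff_eq_inner (ψ : H) (n : ℕ) : Γ.coeff ψ n = ⟪(Γ.e n : H), ψ⟫_ℂ :=
  Γ.e.repr_apply_apply ψ n

lemma memℓp_lam_mul {ψ : H} (h : Γ.MemHs 2 ψ) :
    Memℓp (fun n => (Γ.lam n : ℂ) * Γ.coeff ψ n) 2 := by
  apply memℓp_gen
  have : ∀ n, ‖(Γ.lam n : ℂ) * Γ.coeff ψ n‖ ^ (2 : ℝ≥0∞).toReal
      = Γ.lam n ^ (2 : ℝ) * ‖Γ.coeff ψ n‖ ^ 2 := by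
    intro n
    have h0 := (Γ.lam_pos n).le
    rw [ENNReal.toReal_ofNat, Real.rpow_two, Real.rpow_two, norm_mul, Complex.norm_real,
      Real.norm_eq_abs, abs_of_nonneg h0]
    ring
  simpa only [this, DiscreteSpectralOp.MemHs] using h

lemma hasSum_apply {ψ : H} (h : Γ.MemHs 2 ψ) :
    HasSum (fun n => ((Γ.lam n : ℂ) * Γ.coeff ψ n) • (Γ.e n : H)) (Γ.apply ψ) := by
  have hf := Γ.e.hasSum_repr_symm ⟨_, Γ.memℓp_lam_mul h⟩
  have : Γ.apply ψ = Γ.e.repr.symm ⟨_, Γ.memℓp_lam_mul h⟩ := hf.tsum_eq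
  rw [this]
  exact hf

lemma hasSum_inner_apply (χ : H) {ψ : H} (h : Γ.MemHs 2 ψ) :
    HasSum (fun n => (starRingEnd ℂ) (Γ.coeff χ n) * ((Γ.lam n : ℂ) * Γ.coeff ψ n))
      ⟪χ, Γ.apply ψ⟫_ℂ := by
  have := (Γ.hasSum_apply h).mapL (innerSL ℂ χ)
  convert this using 2 with n
  · rfl
  rw [innerSL_apply_apply, inner_smul_right, Γ.coeff_eq_inner χ n, ← inner_conj_symm,
    Complex.conj_conj]
  ring
  rfl

end DiscreteSpectralOp

namespace DiscreteSpectralOp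

/-- the `ℓ²` element with entries `√λ_n c_n(ψ)`, for `ψ ∈ H¹` -/
def sqrtLamCoeff (Γ : DiscreteSpectralOp H) {ψ : H} (h : Γ.MemHs 1 ψ) :
    lp (fun _ : ℕ => ℂ) 2 :=
  ⟨fun n => (Real.sqrt (Γ.lam n) : ℂ) * Γ.coeff ψ n, by
    apply memℓp_gen
    have : ∀ n, ‖(Real.sqrt (Γ.lam n) : ℂ) * Γ.coeff ψ n‖ ^ (2 : ℝ≥0∞).toReal
        = Γ.lam n ^ (1 : ℝ) * ‖Γ.coeff ψ n‖ ^ 2 := by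
      intro n
      have h0 := (Γ.lam_pos n).le
      rw [ENNReal.toReal_ofNat, Real.rpow_two, Real.rpow_one, norm_mul, Complex.norm_real,
        Real.norm_eq_abs, abs_of_nonneg (Real.sqrt_nonneg _), mul_pow, Real.sq_sqrt h0]
    simpa only [this, DiscreteSpectralOp.MemHs] using h⟩

variable (Γ : DiscreteSpectralOp H)

lemma norm_sqrtLamCoeff {ψ : H} (h : Γ.MemHs 1 ψ) :
    ‖Γ.sqrtLamCoeff h‖ = Γ.snorm 1 ψ := by
  have hterm : ∀ n, ‖(Γ.sqrtLamCoeff h : ∀ _ : ℕ, ℂ) n‖ ^ (2 : ℝ≥0∞).toReal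
      = Γ.lam n ^ (1 : ℝ) * ‖Γ.coeff ψ n‖ ^ 2 := by
    intro n
    have h0 := (Γ.lam_pos n).le
    show ‖(Real.sqrt (Γ.lam n) : ℂ) * Γ.coeff ψ n‖ ^ (2 : ℝ≥0∞).toReal = _
    rw [ENNReal.toReal_ofNat, Real.rpow_two, Real.rpow_one, norm_mul, Complex.norm_real,
      Real.norm_eq_abs, abs_of_nonneg (Real.sqrt_nonneg _), mul_pow, Real.sq_sqrt h0]
  rw [lp.norm_eq_tsum_rpow (by norm_num) (Γ.sqrtLamCoeff h), DiscreteSpectralOp.snorm,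
    Real.sqrt_eq_rpow, tsum_congr hterm]
  norm_num

lemma inner_sqrtLamCoeff {χ ψ : H} (hχ : Γ.MemHs 1 χ) (hψ2 : Γ.MemHs 2 ψ) (hψ : Γ.MemHs 1 ψ) :
    ⟪Γ.sqrtLamCoeff hχ, Γ.sqrtLamCoeff hψ⟫_ℂ = ⟪χ, Γ.apply ψ⟫_ℂ := by
  rw [lp.inner_eq_tsum, ← (Γ.hasSum_inner_apply χ hψ2).tsum_eq]
  apply tsum_congr
  intro n
  rw [RCLike.inner_apply']
  show (starRingEnd ℂ) ((Real.sqrt (Γ.lam n) : ℂ) * Γ.coeff χ n)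
      * ((Real.sqrt (Γ.lam n) : ℂ) * Γ.coeff ψ n) = _
  rw [map_mul, Complex.conj_ofReal]
  have : ((Real.sqrt (Γ.lam n) : ℝ) : ℂ) * (Real.sqrt (Γ.lam n) : ℂ) = (Γ.lam n : ℂ) := by
    rw [← Complex.ofReal_mul, Real.mul_self_sqrt (Γ.lam_pos n).le]
  calc (Real.sqrt (Γ.lam n) : ℂ) * (starRingEnd ℂ) (Γ.coeff χ n)
        * ((Real.sqrt (Γ.lam n) : ℂ) * Γ.coeff ψ n)
      = (starRingEnd ℂ) (Γ.coeff χ n)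
        * (((Real.sqrt (Γ.lam n) : ℂ) * (Real.sqrt (Γ.lam n) : ℂ)) * Γ.coeff ψ n) := by ring
    _ = (starRingEnd ℂ) (Γ.coeff χ n) * ((Γ.lam n : ℂ) * Γ.coeff ψ n) := by rw [this]
  
lemma norm_inner_apply_le {χ ψ : H} (hχ : Γ.MemHs 1 χ) (hψ2 : Γ.MemHs 2 ψ) (hψ : Γ.MemHs 1 ψ) :
    ‖⟪χ, Γ.apply ψ⟫_ℂ‖ ≤ Γ.snorm 1 χ * Γ.snorm 1 ψ := by
  rw [← Γ.inner_sqrtLamCoeff hχ hψ2 hψ, ← Γ.norm_sqrtLamCoeff hχ, ← Γ.norm_sqrtLamCoeff hψ]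
  exact norm_inner_le_norm _ _

lemma inner_apply_self {ψ : H} (hψ2 : Γ.MemHs 2 ψ) (hψ : Γ.MemHs 1 ψ) :
    ⟪ψ, Γ.apply ψ⟫_ℂ = ((Γ.snorm 1 ψ ^ 2 : ℝ) : ℂ) := by
  have h1 := Γ.hasSum_inner_apply ψ hψ2
  have h2 : HasSum (fun n => ((Γ.lam n ^ (1:ℝ) * ‖Γ.coeff ψ n‖ ^ 2 : ℝ) : ℂ))
      ((∑' n, Γ.lam n ^ (1:ℝ) * ‖Γ.coeff ψ n‖ ^ 2 : ℝ) : ℂ) :=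
    (hψ.hasSum).mapL Complex.ofRealCLM
  have heq : (fun n => (starRingEnd ℂ) (Γ.coeff ψ n) * ((Γ.lam n : ℂ) * Γ.coeff ψ n))
      = fun n => ((Γ.lam n ^ (1:ℝ) * ‖Γ.coeff ψ n‖ ^ 2 : ℝ) : ℂ) := by
    funext n
    rw [Real.rpow_one]
    push_cast
    rw [show (starRingEnd ℂ) (Γ.coeff ψ n) * ((Γ.lam n : ℂ) * Γ.coeff ψ n)
        = (Γ.lam n : ℂ) * ((starRingEnd ℂ) (Γ.coeff ψ n) * Γ.coeff ψ n) by ring,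
      RCLike.conj_mul]
    norm_num
  rw [heq] at h1
  have := h1.unique h2
  rw [this, DiscreteSpectralOp.snorm, Real.sq_sqrt]
  exact tsum_nonneg fun n => mul_nonneg (Real.rpow_nonneg (Γ.lam_pos n).le _) (by positivity)

lemma memHs_one_of_two {ψ : H} (h : Γ.MemHs 2 ψ) : Γ.MemHs 1 ψ := by
  refine Summable.of_nonneg_of_le (fun n => mul_nonneg (Real.rpow_nonneg (Γ.lam_pos n).le _) (by positivity)) (fun n => ?_) (h.mul_left (Γ.lam 0)⁻¹)
  have h0 := Γ.lam_pos 0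
  have hn := Γ.lam_pos n
  have hmono := Γ.lam_mono (Nat.zero_le n)
  rw [Real.rpow_one, Real.rpow_two]
  have hc : (0:ℝ) ≤ ‖Γ.coeff ψ n‖ ^ 2 := by positivity
  rw [show (Γ.lam 0)⁻¹ * (Γ.lam n ^ 2 * ‖Γ.coeff ψ n‖ ^ 2)
      = ((Γ.lam 0)⁻¹ * Γ.lam n) * (Γ.lam n * ‖Γ.coeff ψ n‖ ^ 2) by ring]
  nlinarith [mul_nonneg hn.le hc, (one_le_inv_mul₀ h0).mpr hmono]

lemma snorm_one_pos {ψ : H} (h : Γ.MemHs 1 ψ) (hne : ψ ≠ 0) : 0 < Γ.snorm 1 ψ := by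
  obtain ⟨n, hn⟩ : ∃ n, Γ.coeff ψ n ≠ 0 := by
    by_contra hc
    push_neg at hc
    apply hne
    have : Γ.e.repr ψ = 0 := by
      ext n
      exact hc n
    simpa using congrArg Γ.e.repr.symm this
  apply Real.sqrt_pos.mpr
  have hterm : 0 < Γ.lam n ^ (1:ℝ) * ‖Γ.coeff ψ n‖ ^ 2 := by
    rw [Real.rpow_one]
    have := Γ.lam_pos n
    have : 0 < ‖Γ.coeff ψ n‖ := norm_pos_iff.mpr hn
    positivity
  calc (0:ℝ) < Γ.lam n ^ (1:ℝ) * ‖Γ.coeff ψ n‖ ^ 2 := hterm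
    _ ≤ _ := h.le_tsum n fun j _ => mul_nonneg (Real.rpow_nonneg (Γ.lam_pos j).le _) (by positivity)

end DiscreteSpectralOp
/-- `φ` solves the Bochner differential equation `dφ/dt = iAL φ − Γ φ`, `φ(0) = φ₀`. -/
def IsHeatSolution (Γ : DiscreteSpectralOp H) (L : H →ₗ[ℂ] H) (A : ℝ) (φ₀ : H)
    (φ : ℝ → H) : Prop :=
  φ 0 = φ₀ ∧ ContinuousOn φ (Ici 0) ∧
    ∀ t : ℝ, 0 < t → Γ.MemHs 2 (φ t) ∧
      HasDerivAt φ ((A : ℂ) • (Complex.I • L (φ t)) - Γ.apply (φ t)) t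


theorem no_enhanced_relaxation_of_H1_eigenvector
    (Γ : DiscreteSpectralOp H) (L : H →ₗ[ℂ] H)
    -- `L` is symmetric on `H¹(Γ)` and satisfies `‖Lψ‖ ≤ C‖ψ‖₁`:
    (hsym : ∀ ψ χ : H, Γ.MemHs 1 ψ → Γ.MemHs 1 χ → ⟪L ψ, χ⟫_ℂ = ⟪ψ, L χ⟫_ℂ)
    (C : ℝ) (hL : ∀ ψ : H, Γ.MemHs 1 ψ → ‖L ψ‖ ≤ C * Γ.snorm 1 ψ)
    (φ₀ : H) (hφ₀ : Γ.MemHs 1 φ₀) (hnorm : ‖φ₀‖ = 1)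
    (E : ℝ) (heig : L φ₀ = (E : ℂ) • φ₀)
    (A : ℝ) (φ : ℝ → H) (hφ : IsHeatSolution Γ L A φ₀ φ) :
    1 / 2 ≤ ‖φ ((2 * Γ.snorm 1 φ₀ ^ 2)⁻¹)‖ := by
  obtain ⟨h0, hcont, hode⟩ := hφ
  have hφ₀ne : φ₀ ≠ 0 := by
    intro h; rw [h, norm_zero] at hnorm; norm_num at hnorm
  have ha : 0 < Γ.snorm 1 φ₀ := Γ.snorm_one_pos hφ₀ hφ₀ne
  set a := Γ.snorm 1 φ₀ with hadef
  set τ := (2 * a ^ 2)⁻¹ with hτdef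
  have hτ : 0 < τ := by positivity
  set c : ℂ := -((A : ℂ) * (E : ℂ) * Complex.I) with hc
  set g : ℝ → ℂ := fun t => Complex.exp (c * t) * ⟪φ₀, φ t⟫_ℂ with hg
  set F : ℝ → ℝ := fun t => (g t).re + a ^ 2 / 2 * t - ‖φ t‖ ^ 2 / 4 with hF
  -- continuity of F on [0, τ]
  have hφc : ContinuousOn φ (Icc (0:ℝ) τ) := hcont.mono Icc_subset_Ici_self
  have hgc : ContinuousOn g (Icc (0:ℝ) τ) := by
    rw [hg]
    exact ((Complex.continuous_exp.comp (by continuity)).continuousOn).mul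
      (continuousOn_const.inner hφc)
  have hFc : ContinuousOn F (Icc (0:ℝ) τ) := by
    rw [hF]
    exact ((Complex.continuous_re.comp_continuousOn hgc).add
      ((continuous_const.mul continuous_id).continuousOn)).sub
      ((hφc.norm.pow 2).div_const 4)
  -- derivative of F is nonnegative on (0, τ)
  have key : ∀ t ∈ Ioo (0:ℝ) τ, ∃ d, HasDerivAt F d t ∧ 0 ≤ d := by
    intro t ht
    obtain ⟨hmem2, hD⟩ := hode t ht.1
    have hmem1 : Γ.MemHs 1 (φ t) := Γ.memHs_one_of_two hmem2
    -- eigenvalue identity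
    have hLφ : ⟪φ₀, L (φ t)⟫_ℂ = (E : ℂ) * ⟪φ₀, φ t⟫_ℂ := by
      rw [← hsym φ₀ (φ t) hφ₀ hmem1, heig, inner_smul_left, Complex.conj_ofReal]
    have hinnD : ⟪φ₀, (A : ℂ) • (Complex.I • L (φ t)) - Γ.apply (φ t)⟫_ℂ
        = (A : ℂ) * (Complex.I * ((E : ℂ) * ⟪φ₀, φ t⟫_ℂ)) - ⟪φ₀, Γ.apply (φ t)⟫_ℂ := by
      rw [inner_sub_right, inner_smul_right, inner_smul_right, hLφ]
    -- derivative of g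
    have hlin : HasDerivAt (fun s : ℝ => c * (s : ℂ)) c t := by
      simpa using (Complex.ofRealCLM.hasDerivAt (x := t)).const_mul c
    have hexp := hlin.cexp
    have hinn : HasDerivAt (fun s => ⟪φ₀, φ s⟫_ℂ)
        ⟪φ₀, (A : ℂ) • (Complex.I • L (φ t)) - Γ.apply (φ t)⟫_ℂ t := by
      simpa only [inner_zero_left, add_zero] using (hasDerivAt_const t φ₀).inner ℂ hD
    have hg' : HasDerivAt g (Complex.exp (c * t) * (-⟪φ₀, Γ.apply (φ t)⟫_ℂ)) t := by
      rw [hg]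
      have h2 := hexp.mul hinn
      convert h2 using 1
      · rfl
      · rfl
      rw [hinnD, hc]
      ring
    -- the inner product ⟪φ t, L (φ t)⟫ is real
    have hZ : (⟪φ t, L (φ t)⟫_ℂ).im = 0 := by
      have h3 : (starRingEnd ℂ) ⟪φ t, L (φ t)⟫_ℂ = ⟪φ t, L (φ t)⟫_ℂ := by
        rw [inner_conj_symm]
        exact hsym (φ t) (φ t) hmem1 hmem1
      exact Complex.conj_eq_iff_im.mp h3
    have hS : ⟪φ t, Γ.apply (φ t)⟫_ℂ = ((Γ.snorm 1 (φ t) ^ 2 : ℝ) : ℂ) :=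
      Γ.inner_apply_self hmem2 hmem1
    have hre : (⟪φ t, (A : ℂ) • (Complex.I • L (φ t)) - Γ.apply (φ t)⟫_ℂ).re
        = -(Γ.snorm 1 (φ t) ^ 2) := by
      rw [inner_sub_right, inner_smul_right, inner_smul_right, hS]
      simp [Complex.mul_re, Complex.mul_im, hZ, ← Complex.ofReal_pow]
    -- derivative of ‖φ s‖²
    have hsq : HasDerivAt (fun s => ‖φ s‖ ^ 2) (-(2 * Γ.snorm 1 (φ t) ^ 2)) t := by
      have h1 := hD.inner ℂ hD
      have h2 := Complex.reCLM.hasFDerivAt.comp_hasDerivAt t h1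
      have hfun : (fun s => (⟪φ s, φ s⟫_ℂ).re) = fun s => ‖φ s‖ ^ 2 := by
        funext s
        rw [inner_self_eq_norm_sq_to_K (𝕜 := ℂ)]
        norm_cast
      have h3 : HasDerivAt (fun s => ‖φ s‖ ^ 2)
          (Complex.reCLM (⟪φ t, (A : ℂ) • (Complex.I • L (φ t)) - Γ.apply (φ t)⟫_ℂ
            + ⟪(A : ℂ) • (Complex.I • L (φ t)) - Γ.apply (φ t), φ t⟫_ℂ)) t := by
        rw [← hfun]
        exact h2
      convert h3 using 1
      show -(2 * Γ.snorm 1 (φ t) ^ 2)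
        = (⟪φ t, (A : ℂ) • (Complex.I • L (φ t)) - Γ.apply (φ t)⟫_ℂ
          + ⟪(A : ℂ) • (Complex.I • L (φ t)) - Γ.apply (φ t), φ t⟫_ℂ).re
      rw [← inner_conj_symm ((A : ℂ) • (Complex.I • L (φ t)) - Γ.apply (φ t)) (φ t),
        Complex.add_re, Complex.conj_re, hre]
      ring
    -- assemble
    have hgre : HasDerivAt (fun s => (g s).re)
        ((Complex.exp (c * t) * (-⟪φ₀, Γ.apply (φ t)⟫_ℂ)).re) t :=
      Complex.reCLM.hasFDerivAt.comp_hasDerivAt t hg'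
    have hlin2 : HasDerivAt (fun s : ℝ => a ^ 2 / 2 * s) (a ^ 2 / 2) t := by
      simpa using (hasDerivAt_id t).const_mul (a ^ 2 / 2)
    have hFd : HasDerivAt F ((Complex.exp (c * t) * (-⟪φ₀, Γ.apply (φ t)⟫_ℂ)).re
        + a ^ 2 / 2 - -(2 * Γ.snorm 1 (φ t) ^ 2) / 4) t := by
      rw [hF]
      exact (hgre.add hlin2).sub (hsq.div_const 4)
    refine ⟨_, hFd, ?_⟩
    -- nonnegativity of the derivative
    have hXle : ‖⟪φ₀, Γ.apply (φ t)⟫_ℂ‖ ≤ a * Γ.snorm 1 (φ t) :=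
      Γ.norm_inner_apply_le hφ₀ hmem2 hmem1
    have habs : ‖Complex.exp (c * t)‖ = 1 := by
      rw [Complex.norm_exp]
      simp [hc, Complex.mul_re, Complex.mul_im]
    have hge : -(a * Γ.snorm 1 (φ t))
        ≤ (Complex.exp (c * t) * (-⟪φ₀, Γ.apply (φ t)⟫_ℂ)).re := by
      have h1 := Complex.abs_re_le_norm (Complex.exp (c * t) * (-⟪φ₀, Γ.apply (φ t)⟫_ℂ))
      have h2 : ‖Complex.exp (c * t) * (-⟪φ₀, Γ.apply (φ t)⟫_ℂ)‖
          = ‖⟪φ₀, Γ.apply (φ t)⟫_ℂ‖ := by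
        rw [norm_mul, habs, one_mul, norm_neg]
      rw [h2] at h1
      have := neg_abs_le ((Complex.exp (c * t) * (-⟪φ₀, Γ.apply (φ t)⟫_ℂ)).re)
      linarith [abs_le.mp h1]
    nlinarith [two_mul_le_add_sq a (Γ.snorm 1 (φ t)), hge]
  -- F is monotone on [0, τ]
  have hmono : MonotoneOn F (Icc 0 τ) := by
    apply monotoneOn_of_deriv_nonneg (convex_Icc 0 τ) hFc
    · intro x hx
      rw [interior_Icc] at hx
      obtain ⟨d, hd, _⟩ := key x hx
      exact hd.differentiableAt.differentiableWithinAt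
    · intro x hx
      rw [interior_Icc] at hx
      obtain ⟨d, hd, hd0⟩ := key x hx
      rw [hd.deriv]; exact hd0
  have hFmono : F 0 ≤ F τ :=
    hmono ⟨le_refl _, hτ.le⟩ ⟨hτ.le, le_refl _⟩ hτ.le
  -- endpoint values
  have hF0 : F 0 = 3 / 4 := by
    have hg0 : g 0 = 1 := by
      rw [hg]
      simp only [Complex.ofReal_zero, mul_zero, Complex.exp_zero, one_mul, h0]
      rw [inner_self_eq_norm_sq_to_K (𝕜 := ℂ), hnorm]
      norm_num
    rw [hF]
    simp [hg0, h0, hnorm]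
    norm_num
  have hgτre : (g τ).re ≤ ‖φ τ‖ := by
    have h1 := Complex.re_le_norm (g τ)
    have h2 : ‖g τ‖ ≤ ‖φ τ‖ := by
      rw [hg]
      simp only
      rw [norm_mul]
      have habs : ‖Complex.exp (c * τ)‖ = 1 := by
        rw [Complex.norm_exp]
        simp [hc, Complex.mul_re, Complex.mul_im]
      rw [habs, one_mul]
      calc ‖⟪φ₀, φ τ⟫_ℂ‖ ≤ ‖φ₀‖ * ‖φ τ‖ := norm_inner_le_norm _ _
        _ = ‖φ τ‖ := by rw [hnorm, one_mul]
    linarith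
  have hτval : a ^ 2 / 2 * τ = 1 / 4 := by
    rw [hτdef]
    field_simp
    ring
  have hFτ : F τ ≤ ‖φ τ‖ + 1 / 4 - ‖φ τ‖ ^ 2 / 4 := by
    rw [hF]
    simp only
    rw [hτval]
    linarith
  have hfinal : 3 / 4 ≤ ‖φ τ‖ + 1 / 4 - ‖φ τ‖ ^ 2 / 4 := by
    rw [← hF0]
    exact hFmono.trans hFτ
  nlinarith [sq_nonneg (‖φ τ‖)]
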